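/- Let C be a 4×4 complex matrix equal to a scalar multiple of the identity. Then every symmetric 4×4 matrix X satisfies that CX is symmetric; i.e., the solution space has dimension 10. Conversely, if C is not a scalar multiple of the identity, then the space of symmetric 4×4 matrices X with CX symmetric has dimension at most 8. -/

import Mathlib

set_option synthInstance.maxHeartbeats 1000000
set_option maxHeartbeats 1000000

/-!
STATEMENT 6.  If C is a scalar multiple of the identity then every symmetric
4×4 matrix X satisfies that CX is symmetric (so the solution space
{X symmetric : CX symmetric} has the full dimension 10); conversely, if C is
not a scalar matrix, then this solution space has dimension at most 8.
-/

open Matrix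

/-- The space of symmetric matrices X with CX symmetric. -/
noncomputable def solSpace (C : Matrix (Fin 4) (Fin 4) ℂ) :
    Submodule ℂ (Matrix (Fin 4) (Fin 4) ℂ) where
  carrier := {X | X.IsSymm ∧ (C * X).IsSymm}
  add_mem' := fun hX hY =>
    ⟨hX.1.add hY.1, by rw [Matrix.mul_add]; exact hX.2.add hY.2⟩
  zero_mem' := ⟨Matrix.isSymm_zero, by rw [Matrix.mul_zero]; exact Matrix.isSymm_zero⟩
  smul_mem' := fun c X hX =>
    ⟨hX.1.smul c, by rw [Matrix.mul_smul]; exact hX.2.smul c⟩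

/-- The space of all symmetric matrices. -/
noncomputable def symmSpace : Submodule ℂ (Matrix (Fin 4) (Fin 4) ℂ) where
  carrier := {X | X.IsSymm}
  add_mem' := fun hX hY => hX.add hY
  zero_mem' := Matrix.isSymm_zero
  smul_mem' := fun c _ hX => hX.smul c

/-- index of position (i,j) among the 10 upper-triangular slots -/
def posIdx : Fin 4 → Fin 4 → Fin 10 :=
  ![![0,1,2,3],![1,4,5,6],![2,5,7,8],![3,6,8,9]]

def slot : Fin 10 → Fin 4 × Fin 4 :=
  ![(0,0),(0,1),(0,2),(0,3),(1,1),(1,2),(1,3),(2,2),(2,3),(3,3)]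

noncomputable def symF : symmSpace →ₗ[ℂ] (Fin 10 → ℂ) where
  toFun X := fun k => (X : Matrix (Fin 4) (Fin 4) ℂ) (slot k).1 (slot k).2
  map_add' X Y := by funext k; rfl
  map_smul' c X := by funext k; rfl

noncomputable def symG : (Fin 10 → ℂ) →ₗ[ℂ] symmSpace where
  toFun v := ⟨Matrix.of fun i j => v (posIdx i j), by
    apply Matrix.IsSymm.ext; intro i j
    have : posIdx j i = posIdx i j := by fin_cases i <;> fin_cases j <;> rfl
    simp [Matrix.of_apply, this]⟩
  map_add' v w := by ext i j; rfl
  map_smul' c v := by ext i j; rfl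

noncomputable def symEquiv : symmSpace ≃ₗ[ℂ] (Fin 10 → ℂ) :=
  LinearEquiv.ofLinear symF symG
    (by ext v k; fin_cases k <;> rfl)
    (by
      ext X i j
      have h := X.2.apply
      fin_cases i <;> fin_cases j <;> first | rfl | exact h _ _)

lemma finrank_symmSpace : Module.finrank ℂ symmSpace = 10 := by
  rw [symEquiv.finrank_eq]
  simp

/-- The two linear functionals X ↦ (CX - XCᵀ) at two chosen positions. -/
noncomputable def phiL (C : Matrix (Fin 4) (Fin 4) ℂ) (a₁ b₁ a₂ b₂ : Fin 4) :
    symmSpace →ₗ[ℂ] ℂ × ℂ where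
  toFun X := ((C * (X : Matrix (Fin 4) (Fin 4) ℂ) - (X : Matrix (Fin 4) (Fin 4) ℂ) * Cᵀ) a₁ b₁,
              (C * (X : Matrix (Fin 4) (Fin 4) ℂ) - (X : Matrix (Fin 4) (Fin 4) ℂ) * Cᵀ) a₂ b₂)
  map_add' X Y := by
    simp only [Submodule.coe_add, Matrix.mul_add, Matrix.add_mul]
    simp [Prod.ext_iff, Matrix.sub_apply, Matrix.add_apply]
    constructor <;> ring
  map_smul' c X := by
    simp only [Submodule.coe_smul, Matrix.mul_smul, Matrix.smul_mul]
    simp [Prod.ext_iff, Matrix.sub_apply, Matrix.smul_apply, smul_eq_mul]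
    constructor <;> ring

lemma key (C : Matrix (Fin 4) (Fin 4) ℂ) (a₁ b₁ a₂ b₂ : Fin 4)
    (X₁ X₂ : Matrix (Fin 4) (Fin 4) ℂ) (h₁ : X₁.IsSymm) (h₂ : X₂.IsSymm)
    (hα : (C * X₁ - X₁ * Cᵀ) a₁ b₁ ≠ 0)
    (h0 : (C * X₁ - X₁ * Cᵀ) a₂ b₂ = 0)
    (hγ : (C * X₂ - X₂ * Cᵀ) a₂ b₂ ≠ 0) :
    Module.finrank ℂ (solSpace C) ≤ 8 := by
  set L := phiL C a₁ b₁ a₂ b₂ with hL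
  set α := (C * X₁ - X₁ * Cᵀ) a₁ b₁
  set β := (C * X₂ - X₂ * Cᵀ) a₁ b₁
  set γ := (C * X₂ - X₂ * Cᵀ) a₂ b₂
  have hsurj : Function.Surjective L := by
    rintro ⟨x, y⟩
    refine ⟨(y / γ) • (⟨X₂, h₂⟩ : symmSpace) + ((x - (y / γ) * β) / α) • ⟨X₁, h₁⟩, ?_⟩
    have : L ((y / γ) • (⟨X₂, h₂⟩ : symmSpace) + ((x - (y / γ) * β) / α) • ⟨X₁, h₁⟩)
        = (y / γ) • L ⟨X₂, h₂⟩ + ((x - (y / γ) * β) / α) • L ⟨X₁, h₁⟩ := by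
      simp [map_add, _root_.map_smul]
    rw [this]
    have e1 : L ⟨X₂, h₂⟩ = (β, γ) := rfl
    have e2 : L ⟨X₁, h₁⟩ = (α, (C * X₁ - X₁ * Cᵀ) a₂ b₂) := rfl
    rw [e1, e2, h0]
    simp only [Prod.smul_mk, smul_eq_mul, Prod.mk_add_mk, Prod.mk.injEq, mul_zero, add_zero]
    constructor
    · field_simp; ring
    · field_simp
  have hrange : Module.finrank ℂ (LinearMap.range L) = 2 := by
    rw [LinearMap.range_eq_top.2 hsurj, finrank_top]
    simp [Module.finrank_prod]
  have hker : Module.finrank ℂ (LinearMap.ker L) = 8 := by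
    have := LinearMap.finrank_range_add_finrank_ker L
    rw [hrange, finrank_symmSpace] at this
    omega
  have hle : solSpace C ≤ symmSpace := fun X hX => hX.1
  have heq : Module.finrank ℂ (solSpace C)
      = Module.finrank ℂ (Submodule.comap symmSpace.subtype (solSpace C)) :=
    (Submodule.comapSubtypeEquivOfLe hle).finrank_eq.symm
  rw [heq, ← hker]
  apply Submodule.finrank_mono
  rintro ⟨X, hXs⟩ hmem
  have hX : X ∈ solSpace C := hmem
  have hzero : C * X - X * Cᵀ = 0 := by
    have h1 : (C * X)ᵀ = C * X := hX.2
    have h2 : (C * X)ᵀ = Xᵀ * Cᵀ := Matrix.transpose_mul C X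
    rw [hX.1.eq] at h2
    rw [← h1, h2, sub_self]
  show L ⟨X, hXs⟩ = 0
  have : L ⟨X, hXs⟩ = ((C * X - X * Cᵀ) a₁ b₁, (C * X - X * Cᵀ) a₂ b₂) := rfl
  rw [this, hzero]
  simp

lemma symm_diag (q : Fin 4) : (Matrix.single q q (1:ℂ)).IsSymm := by
  apply Matrix.IsSymm.ext; intro i j; simp [Matrix.single, and_comm]

lemma symm_pair (q b : Fin 4) :
    (Matrix.single q b (1:ℂ) + Matrix.single b q (1:ℂ)).IsSymm := by
  apply Matrix.IsSymm.ext; intro i j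
  simp [Matrix.single, and_comm]
  exact add_comm _ _

lemma exists_third : ∀ p q : Fin 4, ∃ b : Fin 4, b ≠ p ∧ b ≠ q := by decide

/-- Case A: some off-diagonal entry is nonzero. -/
lemma caseA (C : Matrix (Fin 4) (Fin 4) ℂ) (p q : Fin 4) (hpq : p ≠ q) (hC : C p q ≠ 0) :
    Module.finrank ℂ (solSpace C) ≤ 8 := by
  obtain ⟨b, hbp, hbq⟩ := exists_third p q
  apply key C p q p b (Matrix.single q q (1:ℂ))
    (Matrix.single q b (1:ℂ) + Matrix.single b q (1:ℂ)) (symm_diag q) (symm_pair q b)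
  · have : (C * Matrix.single q q (1:ℂ) - Matrix.single q q (1:ℂ) * Cᵀ) p q = C p q := by
      simp [hpq]
    rw [this]; exact hC
  · simp [hpq, hbq]
  · have : (C * (Matrix.single q b (1:ℂ) + Matrix.single b q (1:ℂ))
        - (Matrix.single q b (1:ℂ) + Matrix.single b q (1:ℂ)) * Cᵀ) p b = C p q := by
      simp [Matrix.mul_add, Matrix.add_mul, hpq, hbq, hbp, hpq.symm, hbp.symm]
    rw [this]; exact hC

/-- Case B: C is diagonal with two distinct diagonal entries. -/
lemma caseB (C : Matrix (Fin 4) (Fin 4) ℂ) (hdiag : ∀ a b : Fin 4, a ≠ b → C a b = 0)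
    (p q s : Fin 4) (hpq : p ≠ q) (hsq : s ≠ q) (hsp : s ≠ p)
    (h1 : C p p ≠ C q q) (h2 : C p p ≠ C s s) :
    Module.finrank ℂ (solSpace C) ≤ 8 := by
  apply key C p q p s (Matrix.single p q (1:ℂ) + Matrix.single q p (1:ℂ))
    (Matrix.single p s (1:ℂ) + Matrix.single s p (1:ℂ)) (symm_pair p q) (symm_pair p s)
  · have : (C * (Matrix.single p q (1:ℂ) + Matrix.single q p (1:ℂ))
        - (Matrix.single p q (1:ℂ) + Matrix.single q p (1:ℂ)) * Cᵀ) p q = C p p - C q q := by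
      simp [Matrix.mul_add, Matrix.add_mul, hpq, hpq.symm]
    rw [this]
    exact sub_ne_zero_of_ne h1
  · simp [Matrix.mul_add, Matrix.add_mul, hpq, hpq.symm, hsq, hsp, hdiag s q hsq]
  · have : (C * (Matrix.single p s (1:ℂ) + Matrix.single s p (1:ℂ))
        - (Matrix.single p s (1:ℂ) + Matrix.single s p (1:ℂ)) * Cᵀ) p s = C p p - C s s := by
      simp [Matrix.mul_add, Matrix.add_mul, hsp.symm, hsp]
    rw [this]
    exact sub_ne_zero_of_ne h2

theorem solSpace_dim_scalar_iff (C : Matrix (Fin 4) (Fin 4) ℂ) :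
    ((∃ c : ℂ, C = c • (1 : Matrix (Fin 4) (Fin 4) ℂ)) →
      (∀ X : Matrix (Fin 4) (Fin 4) ℂ, X.IsSymm → (C * X).IsSymm) ∧
      Module.finrank ℂ (solSpace C) = 10) ∧
    ((¬ ∃ c : ℂ, C = c • (1 : Matrix (Fin 4) (Fin 4) ℂ)) →
      Module.finrank ℂ (solSpace C) ≤ 8) := by
  constructor
  · rintro ⟨c, rfl⟩
    have hmul : ∀ X : Matrix (Fin 4) (Fin 4) ℂ,
        (c • (1 : Matrix (Fin 4) (Fin 4) ℂ)) * X = c • X := by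
      intro X; rw [Matrix.smul_mul, Matrix.one_mul]
    constructor
    · intro X hX
      rw [hmul]
      exact hX.smul c
    · have : solSpace (c • (1 : Matrix (Fin 4) (Fin 4) ℂ)) = symmSpace := by
        ext X
        constructor
        · exact fun hX => hX.1
        · intro hX
          exact ⟨hX, by rw [hmul]; exact Matrix.IsSymm.smul hX c⟩
      rw [this, finrank_symmSpace]
  · intro hns
    by_cases hoff : ∃ p q : Fin 4, p ≠ q ∧ C p q ≠ 0
    · obtain ⟨p, q, hpq, hC⟩ := hoff
      exact caseA C p q hpq hC
    · push_neg at hoff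
      have hdiag : ∀ a b : Fin 4, a ≠ b → C a b = 0 := hoff
      have hdd : ∃ i j : Fin 4, C i i ≠ C j j := by
        by_contra h
        push_neg at h
        apply hns
        refine ⟨C 0 0, ?_⟩
        ext i j
        by_cases hij : i = j
        · subst hij
          simp [Matrix.one_apply, h i 0]
        · simp [Matrix.one_apply, hij, hdiag i j hij]
      obtain ⟨i, j, hij⟩ := hdd
      have hijne : i ≠ j := fun h => hij (by rw [h])
      obtain ⟨k, hki, hkj⟩ := exists_third i j
      by_cases hk : C k k = C i i
      · exact caseB C hdiag j i k hijne.symm hki hkj (Ne.symm hij)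
          (fun h => hij (by rw [← hk, ← h]))
      · exact caseB C hdiag i j k hijne hkj hki hij (fun h => hk h.symm)
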